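/- Let T̂ ⊆ {1,…,p} satisfy |T̂| ≤ 2s* and ‖(I − Φ_{T̂})Xθ‖² ≤ c s* log p, assume ‖ε‖² ≤ 2n, event E_n holds, and p ≥ 3. Then for every S ⊆ {1,…,p} with |S| > 3s*: log(π(S)/π(T̂)) ≤ −(1/3)(D − (6L + 4 + 2c)/β)·|S| log p. In particular, if D ≥ 6 + (6L + 4 + 2c)/β then π(S) ≤ exp(−2|S| log p)·π(T̂). -/

import Mathlib

open scoped BigOperators
open Finset

noncomputable section

/-- Span of the columns `X j`, `j ∈ S`. -/
def colSpan {n p : ℕ} (X : Fin p → EuclideanSpace ℝ (Fin n)) (S : Finset (Fin p)) :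
    Submodule ℝ (EuclideanSpace ℝ (Fin n)) :=
  Submodule.span ℝ (X '' ↑S)

/-- `Φ_S`, the orthogonal projection of ℝ^n onto the span of the columns in `S`. -/
noncomputable def proj {n p : ℕ} (X : Fin p → EuclideanSpace ℝ (Fin n)) (S : Finset (Fin p)) :
    EuclideanSpace ℝ (Fin n) →ₗ[ℝ] EuclideanSpace ℝ (Fin n) :=
  (colSpan X S).subtype ∘ₗ (Submodule.orthogonalProjection (colSpan X S)).toLinearMap

/-- Restricted eigenvalue condition: `‖X_S w‖² ≥ n ν ‖w‖²` for all `S` with `|S| ≤ m`. -/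
def RECond {n p : ℕ} (X : Fin p → EuclideanSpace ℝ (Fin n)) (ν : ℝ) (m : ℕ) : Prop :=
  ∀ S : Finset (Fin p), S.card ≤ m → ∀ w : Fin p → ℝ,
    (n : ℝ) * ν * ∑ j ∈ S, w j ^ 2 ≤ ‖∑ j ∈ S, w j • X j‖ ^ 2

/-- The unnormalized weight exp(G(S,Y) − m(S)), where G(S,Y) = ‖Φ_S Y‖²/β and
m(S) = D|S| log p + (2/β) trace(Φ_S) + (4n/β) 1{|S| > 4s}. -/
noncomputable def postWt {n p : ℕ} (X : Fin p → EuclideanSpace ℝ (Fin n))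
    (Y : EuclideanSpace ℝ (Fin n)) (β D : ℝ) (s : ℕ) (S : Finset (Fin p)) : ℝ :=
  Real.exp (‖proj X S Y‖ ^ 2 / β -
    (D * S.card * Real.log p +
      2 * LinearMap.trace ℝ (EuclideanSpace ℝ (Fin n)) (proj X S) / β +
      if 4 * s < S.card then 4 * n / β else 0))

/-- The probability distribution π(S) ∝ exp(G(S,Y) − m(S)) on subsets of {1,…,p}. -/
noncomputable def postPi {n p : ℕ} (X : Fin p → EuclideanSpace ℝ (Fin n))
    (Y : EuclideanSpace ℝ (Fin n)) (β D : ℝ) (s : ℕ) (S : Finset (Fin p)) : ℝ :=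
  postWt X Y β D s S / ∑ S' : Finset (Fin p), postWt X Y β D s S'
section AuxStmt9
variable {n p : ℕ} {X : Fin p → EuclideanSpace ℝ (Fin n)}

lemma proj_mem (S : Finset (Fin p)) (y : EuclideanSpace ℝ (Fin n)) :
    proj X S y ∈ colSpan X S := (Submodule.orthogonalProjection (colSpan X S) y).2

lemma proj_eq_self {S : Finset (Fin p)} {y : EuclideanSpace ℝ (Fin n)}
    (hy : y ∈ colSpan X S) : proj X S y = y := by
  simpa [proj] using Submodule.starProjection_eq_self_iff.2 hy

lemma colSpan_mono {S U : Finset (Fin p)} (h : S ⊆ U) : colSpan X S ≤ colSpan X U :=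
  Submodule.span_mono (Set.image_mono (by exact_mod_cast h))

lemma inner_sub_proj (S : Finset (Fin p)) (y : EuclideanSpace ℝ (Fin n))
    {z : EuclideanSpace ℝ (Fin n)} (hz : z ∈ colSpan X S) :
    (inner ℝ (y - proj X S y) z : ℝ) = 0 := by
  have h := Submodule.sub_starProjection_mem_orthogonal (K := colSpan X S) y
  have := (Submodule.mem_orthogonal _ _).1 h z hz
  rw [real_inner_comm] at this
  simpa [proj] using this

lemma proj_pythagoras (S : Finset (Fin p)) (y : EuclideanSpace ℝ (Fin n)) :
    ‖proj X S y‖ ^ 2 + ‖y - proj X S y‖ ^ 2 = ‖y‖ ^ 2 := by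
  have h := inner_sub_proj (X := X) S y (proj_mem S y)
  have hy : y = proj X S y + (y - proj X S y) := by abel
  calc ‖proj X S y‖ ^ 2 + ‖y - proj X S y‖ ^ 2
      = ‖proj X S y + (y - proj X S y)‖ ^ 2 := by
        rw [norm_add_sq_real, real_inner_comm, h]; ring
    _ = ‖y‖ ^ 2 := by rw [← hy]

lemma proj_proj_of_subset {S U : Finset (Fin p)} (h : S ⊆ U)
    (y : EuclideanSpace ℝ (Fin n)) : proj X S (proj X U y) = proj X S y := by
  simpa [proj] using congrArg (fun v : colSpan X S => (v : EuclideanSpace ℝ (Fin n)))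
    (Submodule.orthogonalProjectionOnto_starProjection_of_le (colSpan_mono h) y)

lemma trace_proj (S : Finset (Fin p)) :
    LinearMap.trace ℝ (EuclideanSpace ℝ (Fin n)) (proj X S)
      = (Module.finrank ℝ (colSpan X S) : ℝ) := by
  rw [proj, LinearMap.trace_comp_comm']
  have : (Submodule.orthogonalProjection (colSpan X S)).toLinearMap ∘ₗ (colSpan X S).subtype
      = LinearMap.id := by
    ext v
    simp [Submodule.orthogonalProjectionOnto_mem_subspace_eq_self]
  rw [this, LinearMap.trace_id]

lemma finrank_colSpan_le (S : Finset (Fin p)) :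
    Module.finrank ℝ (colSpan X S) ≤ S.card := by
  classical
  have h1 : colSpan X S = Submodule.span ℝ ((S.image X : Finset _) : Set _) := by
    rw [colSpan, Finset.coe_image]
  rw [h1]
  exact le_trans (finrank_span_finset_le_card _) (Finset.card_image_le)

lemma exists_rep {U : Finset (Fin p)} {v : EuclideanSpace ℝ (Fin n)}
    (hv : v ∈ colSpan X U) : ∃ w : Fin p → ℝ, v = ∑ j ∈ U, w j • X j := by
  have himg : X '' ↑U = Set.range (fun i : {x // x ∈ U} => X i.1) := by
    ext y
    simp [Set.mem_image, Set.mem_range, Subtype.exists]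
  rw [colSpan, himg] at hv
  obtain ⟨c, hc⟩ := (Submodule.mem_span_range_iff_exists_fun ℝ).1 hv
  classical
  refine ⟨fun j => if h : j ∈ U then c ⟨j, h⟩ else 0, ?_⟩
  rw [← hc]
  rw [Finset.univ_eq_attach]
  rw [← Finset.sum_attach U (fun j => (if h : j ∈ U then c ⟨j, h⟩ else 0) • X j)]
  refine Finset.sum_congr rfl fun i _ => ?_
  rw [dif_pos i.2]

lemma inner_eps_le {ν : ℝ} (hν : 0 < ν)
    {m : ℕ} (hRE : RECond X ν m) (ε : EuclideanSpace ℝ (Fin n)) {L q : ℝ} (hLq : 0 ≤ L * q)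
    (T U : Finset (Fin p)) (hU : U.card ≤ m)
    (hE : ∀ j ∉ T, (inner ℝ (X j - proj X T (X j)) ε : ℝ) ^ 2 ≤ (n : ℝ) * L * ν * q)
    {z : EuclideanSpace ℝ (Fin n)} (hzU : z ∈ colSpan X U) (hzT : proj X T z = 0) :
    (inner ℝ z ε : ℝ) ^ 2 ≤ ‖z‖ ^ 2 * (((U \ T).card : ℝ) * (L * q)) := by
  classical
  obtain ⟨w, hw⟩ := exists_rep hzU
  have hre : (n : ℝ) * ν * ∑ j ∈ U, w j ^ 2 ≤ ‖z‖ ^ 2 := by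
    have := hRE U hU w
    rwa [← hw] at this
  have hiz : (inner ℝ z ε : ℝ) = ∑ j ∈ U, w j * (inner ℝ (X j - proj X T (X j)) ε : ℝ) := by
    have hz2 : z = ∑ j ∈ U, w j • (X j - proj X T (X j)) := by
      have hPz : proj X T z = ∑ j ∈ U, w j • proj X T (X j) := by
        rw [hw, map_sum]; simp [map_smul]
      rw [hzT] at hPz
      calc z = z - 0 := by abel
        _ = (∑ j ∈ U, w j • X j) - ∑ j ∈ U, w j • proj X T (X j) := by rw [← hw, ← hPz]
        _ = ∑ j ∈ U, w j • (X j - proj X T (X j)) := by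
            rw [← Finset.sum_sub_distrib]
            exact Finset.sum_congr rfl fun j _ => (smul_sub _ _ _).symm
    rw [hz2, sum_inner]
    exact Finset.sum_congr rfl fun j _ => real_inner_smul_left _ _ _
  have hvanish : ∀ j ∈ U, j ∉ U \ T →
      w j * (inner ℝ (X j - proj X T (X j)) ε : ℝ) = 0 := by
    intro j hjU hj
    have hjT : j ∈ T := by
      by_contra hjT
      exact hj (Finset.mem_sdiff.2 ⟨hjU, hjT⟩)
    have hXj : X j ∈ colSpan X T :=
      Submodule.subset_span (Set.mem_image_of_mem X hjT)
    rw [proj_eq_self hXj]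
    simp
  have hiz2 : (inner ℝ z ε : ℝ) = ∑ j ∈ U \ T, w j * (inner ℝ (X j - proj X T (X j)) ε : ℝ) := by
    rw [hiz]
    exact (Finset.sum_subset (Finset.sdiff_subset) hvanish).symm
  have hCS := Finset.sum_mul_sq_le_sq_mul_sq (U \ T) w
    (fun j => (inner ℝ (X j - proj X T (X j)) ε : ℝ))
  have ha : ∑ j ∈ U \ T, (inner ℝ (X j - proj X T (X j)) ε : ℝ) ^ 2
      ≤ ((U \ T).card : ℝ) * ((n : ℝ) * ν * (L * q)) := by
    have h := Finset.sum_le_card_nsmul (U \ T)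
      (fun j => (inner ℝ (X j - proj X T (X j)) ε : ℝ) ^ 2) ((n : ℝ) * L * ν * q)
      (fun j hj => hE j (Finset.mem_sdiff.1 hj).2)
    rw [nsmul_eq_mul] at h
    calc _ ≤ ((U \ T).card : ℝ) * ((n : ℝ) * L * ν * q) := h
      _ = ((U \ T).card : ℝ) * ((n : ℝ) * ν * (L * q)) := by ring
  have hw2 : ∑ j ∈ U \ T, w j ^ 2 ≤ ∑ j ∈ U, w j ^ 2 :=
    Finset.sum_le_sum_of_subset_of_nonneg Finset.sdiff_subset fun j _ _ => sq_nonneg _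
  have hw2nn : (0:ℝ) ≤ ∑ j ∈ U, w j ^ 2 := Finset.sum_nonneg fun j _ => sq_nonneg _
  have hann : (0:ℝ) ≤ ∑ j ∈ U \ T, (inner ℝ (X j - proj X T (X j)) ε : ℝ) ^ 2 :=
    Finset.sum_nonneg fun j _ => sq_nonneg _
  calc (inner ℝ z ε : ℝ) ^ 2
      = (∑ j ∈ U \ T, w j * (inner ℝ (X j - proj X T (X j)) ε : ℝ)) ^ 2 := by rw [hiz2]
    _ ≤ (∑ j ∈ U \ T, w j ^ 2) *
        ∑ j ∈ U \ T, (inner ℝ (X j - proj X T (X j)) ε : ℝ) ^ 2 := hCS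
    _ ≤ (∑ j ∈ U, w j ^ 2) * (((U \ T).card : ℝ) * ((n : ℝ) * ν * (L * q))) :=
        mul_le_mul hw2 ha hann hw2nn
    _ = ((n : ℝ) * ν * ∑ j ∈ U, w j ^ 2) * (((U \ T).card : ℝ) * (L * q)) := by ring
    _ ≤ ‖z‖ ^ 2 * (((U \ T).card : ℝ) * (L * q)) :=
        mul_le_mul_of_nonneg_right hre (by positivity)

end AuxStmt9

set_option maxHeartbeats 1000000 in
/-- under events A_n, E_n, F_n and p ≥ 3, for every S with |S| > 3s*,
log(π(S)/π(T̂)) ≤ −(1/3)(D − (6L+4+2c)/β)|S| log p; in particular if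
D ≥ 6 + (6L+4+2c)/β then π(S) ≤ exp(−2|S| log p)·π(T̂). -/
theorem stmt9 {n p s : ℕ} (hn : 0 < n) (hp : 3 ≤ p) (hs : 0 < s) (hsp : 6 * s ≤ p)
    (X : Fin p → EuclideanSpace ℝ (Fin n))
    (hX : ∀ j, ‖X j‖ = Real.sqrt n)
    {ν : ℝ} (hν : 0 < ν) (hRE : RECond X ν (6 * s))
    (θ : Fin p → ℝ) (T : Finset (Fin p)) (hT : T = Finset.univ.filter fun j => θ j ≠ 0)
    (hTcard : T.card = s)
    (ε Y : EuclideanSpace ℝ (Fin n)) (hY : Y = (∑ j, θ j • X j) + ε)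
    (β D c L : ℝ) (hβ : 0 < β) (hD : 0 < D) (hc : 0 < c) (hL : 0 < L)
    (That : Finset (Fin p)) (hThatcard : That.card ≤ 2 * s)
    (hThatrisk : ‖(∑ j, θ j • X j) - proj X That (∑ j, θ j • X j)‖ ^ 2 ≤
      c * s * Real.log p)
    (hF : ‖ε‖ ^ 2 ≤ 2 * n)
    (hE : ∀ S : Finset (Fin p), S.card < 6 * s → ∀ j ∉ S,
      (inner ℝ (X j - proj X S (X j)) ε : ℝ) ^ 2 ≤ (n : ℝ) * L * ν * Real.log p)
    (S : Finset (Fin p)) (hScard : 3 * s < S.card) :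
    Real.log (postPi X Y β D s S / postPi X Y β D s That) ≤
      -(1 / 3) * (D - (6 * L + 4 + 2 * c) / β) * S.card * Real.log p ∧
    (6 + (6 * L + 4 + 2 * c) / β ≤ D →
      postPi X Y β D s S ≤
        Real.exp (-(2 * S.card) * Real.log p) * postPi X Y β D s That) := by

  classical
  have hp0 : (0:ℝ) < (p:ℝ) := by
    have : (3:ℝ) ≤ (p:ℝ) := by exact_mod_cast hp
    linarith
  have hq1 : 1 ≤ Real.log p := by
    rw [Real.le_log_iff_exp_le hp0]
    calc Real.exp 1 ≤ 2.7182818286 := Real.exp_one_lt_d9.le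
      _ ≤ 3 := by norm_num
      _ ≤ (p:ℝ) := by exact_mod_cast hp
  have hq0 : (0:ℝ) < Real.log p := lt_of_lt_of_le one_pos hq1
  set q : ℝ := Real.log p with hqdef
  -- basic casts
  have hs3 : 3 * (s:ℝ) ≤ (S.card:ℝ) := by exact_mod_cast (le_of_lt hScard)
  have htc : (That.card:ℝ) ≤ 2 * (s:ℝ) := by exact_mod_cast hThatcard
  have hSnn : (0:ℝ) ≤ (S.card:ℝ) := Nat.cast_nonneg _
  have hsnn : (0:ℝ) ≤ (s:ℝ) := Nat.cast_nonneg _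
  -- trace facts
  have htrS : (0:ℝ) ≤ LinearMap.trace ℝ (EuclideanSpace ℝ (Fin n)) (proj X S) := by
    rw [trace_proj]; positivity
  have htrT : LinearMap.trace ℝ (EuclideanSpace ℝ (Fin n)) (proj X That) ≤ (That.card:ℝ) := by
    rw [trace_proj]; exact_mod_cast finrank_colSpan_le That
  have htr2 : 2 * (LinearMap.trace ℝ (EuclideanSpace ℝ (Fin n)) (proj X That)
      - LinearMap.trace ℝ (EuclideanSpace ℝ (Fin n)) (proj X S)) ≤ 4 / 3 * (S.card:ℝ) * q := by
    nlinarith [htrT, htrS, htc, hs3, hq1, hSnn]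
  have hcsq : c * (s:ℝ) * q ≤ c / 3 * ((S.card:ℝ) * q) := by
    nlinarith [mul_le_mul_of_nonneg_left hs3 (mul_nonneg hc.le hq0.le)]
  -- THE KEY ESTIMATE (★)
  have hstar : ‖proj X S Y‖ ^ 2 - ‖proj X That Y‖ ^ 2
      + 2 * (LinearMap.trace ℝ (EuclideanSpace ℝ (Fin n)) (proj X That)
        - LinearMap.trace ℝ (EuclideanSpace ℝ (Fin n)) (proj X S))
      - (if 4 * s < S.card then 4 * (n:ℝ) else 0)
      ≤ (6 * L + 4 + 2 * c) / 3 * (S.card:ℝ) * q := by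
    by_cases hcase : 4 * s < S.card
    · -- large S : crude bound
      rw [if_pos hcase]
      have h1 : ‖proj X S Y‖ ^ 2 ≤ ‖Y‖ ^ 2 := by
        have h := proj_pythagoras (X := X) S Y
        nlinarith [sq_nonneg ‖Y - proj X S Y‖]
      have hpyT := proj_pythagoras (X := X) That Y
      have hsplit : Y - proj X That Y = ((∑ j, θ j • X j) - proj X That (∑ j, θ j • X j))
          + (ε - proj X That ε) := by
        rw [hY, map_add]; abel
      have hnε : ‖ε - proj X That ε‖ ^ 2 ≤ 2 * (n:ℝ) := by
        have h := proj_pythagoras (X := X) That ε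
        nlinarith [sq_nonneg ‖proj X That ε‖]
      have htri : ‖Y - proj X That Y‖ ≤ ‖(∑ j, θ j • X j) - proj X That (∑ j, θ j • X j)‖
          + ‖ε - proj X That ε‖ := by
        rw [hsplit]; exact norm_add_le _ _
      have hYT : ‖Y - proj X That Y‖ ^ 2 ≤ 2 * (c * s * q) + 4 * (n:ℝ) := by
        nlinarith [norm_nonneg ((∑ j, θ j • X j) - proj X That (∑ j, θ j • X j)),
          norm_nonneg (ε - proj X That ε), norm_nonneg (Y - proj X That Y),
          hThatrisk, hnε,
          sq_nonneg (‖(∑ j, θ j • X j) - proj X That (∑ j, θ j • X j)‖ - ‖ε - proj X That ε‖)]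
      nlinarith [htr2, hcsq, mul_pos hL (mul_pos (lt_of_lt_of_le (by positivity) hs3) hq0),
        h1, hpyT, hYT]
    · -- moderate S : use event E_n
      rw [if_neg hcase]
      have hS4 : S.card ≤ 4 * s := le_of_not_gt hcase
      set U := S ∪ That with hUdef
      have hTU : That ⊆ U := Finset.subset_union_right
      have hSU : S ⊆ U := Finset.subset_union_left
      have hU6 : U.card ≤ 6 * s := le_trans (Finset.card_union_le _ _) (by omega)
      set z := proj X U Y - proj X That Y with hzdef
      have hzU : z ∈ colSpan X U :=
        Submodule.sub_mem _ (proj_mem U Y) (colSpan_mono hTU (proj_mem That Y))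
      have hPTz : proj X That z = 0 := by
        rw [hzdef, map_sub, proj_proj_of_subset hTU, proj_eq_self (proj_mem That Y), sub_self]
      have hzperp : ∀ v ∈ colSpan X That, (inner ℝ z v : ℝ) = 0 := by
        intro v hv
        have h := inner_sub_proj (X := X) That z hv
        rwa [hPTz, sub_zero] at h
      have h1 : ‖proj X S Y‖ ^ 2 ≤ ‖proj X U Y‖ ^ 2 := by
        have h := proj_pythagoras (X := X) S (proj X U Y)
        rw [proj_proj_of_subset hSU] at h
        nlinarith [sq_nonneg ‖proj X U Y - proj X S Y‖]
      have h2 : ‖proj X U Y‖ ^ 2 - ‖proj X That Y‖ ^ 2 = ‖z‖ ^ 2 := by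
        have h := proj_pythagoras (X := X) That (proj X U Y)
        rw [proj_proj_of_subset hTU] at h
        rw [hzdef]; linarith
      have h3 : ‖z‖ ^ 2 = (inner ℝ z Y : ℝ) := by
        have ha : (inner ℝ (Y - proj X U Y) z : ℝ) = 0 := inner_sub_proj U Y hzU
        have hb : (inner ℝ z (proj X That Y) : ℝ) = 0 := hzperp _ (proj_mem That Y)
        have hc1 : (inner ℝ z Y : ℝ) = (inner ℝ z (proj X U Y) : ℝ) := by
          have h0 : (inner ℝ z (Y - proj X U Y) : ℝ) = 0 := by rw [real_inner_comm]; exact ha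
          rw [inner_sub_right] at h0
          linarith
        have hPU : proj X U Y = z + proj X That Y := by rw [hzdef]; abel
        rw [hc1, hPU, inner_add_right, hb, real_inner_self_eq_norm_sq]
        ring
      have h4 : (inner ℝ z Y : ℝ)
          = (inner ℝ z ((∑ j, θ j • X j) - proj X That (∑ j, θ j • X j)) : ℝ)
            + (inner ℝ z ε : ℝ) := by
        rw [hY, inner_add_right]
        have hperp := hzperp _ (proj_mem That (∑ j, θ j • X j))
        rw [inner_sub_right, hperp]
        ring
      obtain ⟨a, ha0, ha2, hna⟩ : ∃ a : ℝ, 0 ≤ a ∧ a ^ 2 = c * s * q ∧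
          ‖(∑ j, θ j • X j) - proj X That (∑ j, θ j • X j)‖ ≤ a := by
        refine ⟨Real.sqrt (c * s * q), Real.sqrt_nonneg _,
          Real.sq_sqrt (mul_nonneg (mul_nonneg hc.le hsnn) hq0.le), ?_⟩
        rw [← Real.sqrt_sq (norm_nonneg ((∑ j, θ j • X j)
          - proj X That (∑ j, θ j • X j)))]
        exact Real.sqrt_le_sqrt hThatrisk
      obtain ⟨b, hb0, hb2⟩ : ∃ b : ℝ, 0 ≤ b ∧ b ^ 2 = (S.card:ℝ) * (L * q) :=
        ⟨Real.sqrt ((S.card:ℝ) * (L * q)), Real.sqrt_nonneg _,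
          Real.sq_sqrt (mul_nonneg hSnn (mul_nonneg hL.le hq0.le))⟩
      have h5 : (inner ℝ z ((∑ j, θ j • X j) - proj X That (∑ j, θ j • X j)) : ℝ) ≤ ‖z‖ * a := by
        have hcs := real_inner_le_norm z ((∑ j, θ j • X j) - proj X That (∑ j, θ j • X j))
        calc (inner ℝ z ((∑ j, θ j • X j) - proj X That (∑ j, θ j • X j)) : ℝ)
            ≤ ‖z‖ * ‖(∑ j, θ j • X j) - proj X That (∑ j, θ j • X j)‖ := hcs
          _ ≤ ‖z‖ * a := mul_le_mul_of_nonneg_left hna (norm_nonneg z)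
      have h6 : (inner ℝ z ε : ℝ) ≤ ‖z‖ * b := by
        have hkey := inner_eps_le hν hRE ε (mul_nonneg hL.le hq0.le) That U hU6
          (fun j hj => hE That (by omega) j hj) hzU hPTz
        have hcard : ((U \ That).card : ℝ) ≤ (S.card:ℝ) := by
          have hsub : U \ That ⊆ S := by
            intro x hx
            rcases Finset.mem_sdiff.1 hx with ⟨hxU, hxT⟩
            rcases Finset.mem_union.1 hxU with h | h
            · exact h
            · exact absurd h hxT
          exact_mod_cast Finset.card_le_card hsub
        have h2' : (inner ℝ z ε : ℝ) ^ 2 ≤ (‖z‖ * b) ^ 2 := by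
          rw [mul_pow, hb2]
          calc (inner ℝ z ε : ℝ) ^ 2
              ≤ ‖z‖ ^ 2 * (((U \ That).card : ℝ) * (L * q)) := hkey
            _ ≤ ‖z‖ ^ 2 * ((S.card:ℝ) * (L * q)) := by
                apply mul_le_mul_of_nonneg_left _ (sq_nonneg _)
                exact mul_le_mul_of_nonneg_right hcard (mul_nonneg hL.le hq0.le)
        have hzb : (0:ℝ) ≤ ‖z‖ * b := mul_nonneg (norm_nonneg z) hb0
        calc (inner ℝ z ε : ℝ) ≤ |(inner ℝ z ε : ℝ)| := le_abs_self _
          _ ≤ ‖z‖ * b := by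
              rw [← Real.sqrt_sq_eq_abs, ← Real.sqrt_sq hzb]
              exact Real.sqrt_le_sqrt h2'
      have h8 : ‖z‖ ^ 2 ≤ ‖z‖ * a + ‖z‖ * b := by
        calc ‖z‖ ^ 2 = (inner ℝ z Y : ℝ) := h3
          _ = (inner ℝ z ((∑ j, θ j • X j) - proj X That (∑ j, θ j • X j)) : ℝ)
              + (inner ℝ z ε : ℝ) := h4
          _ ≤ ‖z‖ * a + ‖z‖ * b := add_le_add h5 h6
      obtain ⟨t, ht0, ht8, htgoal⟩ : ∃ t : ℝ, 0 ≤ t ∧ t ^ 2 ≤ t * a + t * b ∧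
          (t ^ 2 ≤ (a + b) ^ 2 → ‖z‖ ^ 2 ≤ (a + b) ^ 2) :=
        ⟨‖z‖, norm_nonneg z, h8, fun h => h⟩
      have h7 : ‖z‖ ^ 2 ≤ (a + b) ^ 2 :=
        htgoal (by linarith only [ht8, sq_nonneg (t - (a + b))])
      have hM0 : (0:ℝ) ≤ (c / 3 + L) / 2 * ((S.card:ℝ) * q) :=
        mul_nonneg (by linarith only [hc, hL]) (mul_nonneg hSnn hq0.le)
      have hab : a * b ≤ (c / 3 + L) / 2 * ((S.card:ℝ) * q) := by
        have habsq : (a * b) ^ 2 ≤ ((c / 3 + L) / 2 * ((S.card:ℝ) * q)) ^ 2 := by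
          have hstep1 : c * (s:ℝ) * q * (L * ((S.card:ℝ) * q))
              ≤ c / 3 * ((S.card:ℝ) * q) * (L * ((S.card:ℝ) * q)) :=
            mul_le_mul_of_nonneg_right hcsq (mul_nonneg hL.le (mul_nonneg hSnn hq0.le))
          have hstep2 : c / 3 * L ≤ ((c / 3 + L) / 2) ^ 2 := by
            linarith only [sq_nonneg (c / 3 - L)]
          have hstep3 : c / 3 * L * ((S.card:ℝ) * q) ^ 2
              ≤ ((c / 3 + L) / 2) ^ 2 * ((S.card:ℝ) * q) ^ 2 :=
            mul_le_mul_of_nonneg_right hstep2 (sq_nonneg _)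
          calc (a * b) ^ 2 = a ^ 2 * b ^ 2 := by ring
            _ = c * (s:ℝ) * q * (L * ((S.card:ℝ) * q)) := by
                rw [ha2, hb2]; ring
            _ ≤ c / 3 * ((S.card:ℝ) * q) * (L * ((S.card:ℝ) * q)) := hstep1
            _ = c / 3 * L * ((S.card:ℝ) * q) ^ 2 := by ring
            _ ≤ ((c / 3 + L) / 2) ^ 2 * ((S.card:ℝ) * q) ^ 2 := hstep3
            _ = ((c / 3 + L) / 2 * ((S.card:ℝ) * q)) ^ 2 := by ring
        calc a * b ≤ |a * b| := le_abs_self _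
          _ ≤ (c / 3 + L) / 2 * ((S.card:ℝ) * q) := by
              rw [← Real.sqrt_sq_eq_abs, ← Real.sqrt_sq hM0]
              exact Real.sqrt_le_sqrt habsq
      have hexp : (a + b) ^ 2 = a ^ 2 + 2 * (a * b) + b ^ 2 := by ring
      -- combine
      have hzbound : ‖z‖ ^ 2 ≤ (2 * c / 3 + 2 * L) * ((S.card:ℝ) * q) := by
        linarith only [h7, hab, hcsq, ha2, hb2, hexp]
      linarith only [h1, h2, hzbound, htr2]
  -- translate (★) into the exponent bound
  have hZpos : (0:ℝ) < ∑ S' : Finset (Fin p), postWt X Y β D s S' :=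
    Finset.sum_pos (fun _ _ => Real.exp_pos _) Finset.univ_nonempty
  have hratio : postPi X Y β D s S / postPi X Y β D s That
      = postWt X Y β D s S / postWt X Y β D s That := by
    rw [postPi, postPi, div_div_div_comm, div_self (ne_of_gt hZpos), div_one]
  have hJT : (if 4 * s < That.card then 4 * (n:ℝ) / β else 0) = 0 := if_neg (by omega)
  have hJS : (if 4 * s < S.card then 4 * (n:ℝ) / β else 0)
      = (if 4 * s < S.card then 4 * (n:ℝ) else 0) / β := by
    split <;> simp
  have hlog : Real.log (postPi X Y β D s S / postPi X Y β D s That)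
      = (‖proj X S Y‖ ^ 2 / β - (D * S.card * q
          + 2 * LinearMap.trace ℝ (EuclideanSpace ℝ (Fin n)) (proj X S) / β
          + (if 4 * s < S.card then 4 * (n:ℝ) else 0) / β))
        - (‖proj X That Y‖ ^ 2 / β - (D * That.card * q
          + 2 * LinearMap.trace ℝ (EuclideanSpace ℝ (Fin n)) (proj X That) / β)) := by
    rw [hratio, postWt, postWt, ← Real.exp_sub, Real.log_exp, hJT, hJS, ← hqdef]
    ring
  set tS := LinearMap.trace ℝ (EuclideanSpace ℝ (Fin n)) (proj X S) with htSdef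
  set tT := LinearMap.trace ℝ (EuclideanSpace ℝ (Fin n)) (proj X That) with htTdef
  set AS := ‖proj X S Y‖ ^ 2 with hASdef
  set AT := ‖proj X That Y‖ ^ 2 with hATdef
  set JS := (if 4 * s < S.card then 4 * (n:ℝ) else 0) with hJSdef
  set K : ℝ := 6 * L + 4 + 2 * c with hKdef
  have hmain : (AS / β - (D * S.card * q + 2 * tS / β + JS / β))
      - (AT / β - (D * That.card * q + 2 * tT / β))
      ≤ -(1 / 3) * (D - K / β) * (S.card:ℝ) * q := by
    have e1 : (AS / β - (D * S.card * q + 2 * tS / β + JS / β))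
        - (AT / β - (D * That.card * q + 2 * tT / β))
        = (AS - AT + 2 * (tT - tS) - JS) / β - D * ((S.card:ℝ) - (That.card:ℝ)) * q := by
      field_simp
      ring
    have e2 : (AS - AT + 2 * (tT - tS) - JS) / β ≤ (K / 3 * (S.card:ℝ) * q) / β := by
      apply div_le_div_of_nonneg_right _ hβ.le
      · calc AS - AT + 2 * (tT - tS) - JS ≤ (6 * L + 4 + 2 * c) / 3 * (S.card:ℝ) * q := hstar
          _ = K / 3 * (S.card:ℝ) * q := by rw [hKdef]
    have e3 : D * ((S.card:ℝ) / 3) * q ≤ D * ((S.card:ℝ) - (That.card:ℝ)) * q := by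
      have : (S.card:ℝ) / 3 ≤ (S.card:ℝ) - (That.card:ℝ) := by linarith
      apply mul_le_mul_of_nonneg_right _ hq0.le
      exact mul_le_mul_of_nonneg_left this hD.le
    have e4 : (K / 3 * (S.card:ℝ) * q) / β - D * ((S.card:ℝ) / 3) * q
        = -(1 / 3) * (D - K / β) * (S.card:ℝ) * q := by
      ring
    rw [e1]
    linarith only [e2, e3, e4.le, e4.ge]
  constructor
  · rw [hlog]; exact hmain
  · intro hDK
    have hK6 : 6 ≤ D - K / β := by rw [hKdef]; linarith
    have h2 : (AS / β - (D * S.card * q + 2 * tS / β + JS / β))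
        - (AT / β - (D * That.card * q + 2 * tT / β)) ≤ -(2 * (S.card:ℝ)) * q := by
      have hnn : (0:ℝ) ≤ (D - K / β - 6) * ((S.card:ℝ) * q) :=
        mul_nonneg (by linarith only [hK6]) (mul_nonneg hSnn hq0.le)
      linarith only [hmain, hnn]
    have hwle : postWt X Y β D s S
        ≤ Real.exp (-(2 * (S.card:ℝ)) * q) * postWt X Y β D s That := by
      rw [postWt, postWt, ← Real.exp_add]
      apply Real.exp_le_exp.2
      have hexpS : ‖proj X S Y‖ ^ 2 / β - (D * S.card * Real.log p
          + 2 * LinearMap.trace ℝ (EuclideanSpace ℝ (Fin n)) (proj X S) / β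
          + if 4 * s < S.card then 4 * (n:ℝ) / β else 0)
          = AS / β - (D * S.card * q + 2 * tS / β + JS / β) := by
        rw [hJS, ← hqdef]
      have hexpT : ‖proj X That Y‖ ^ 2 / β - (D * That.card * Real.log p
          + 2 * LinearMap.trace ℝ (EuclideanSpace ℝ (Fin n)) (proj X That) / β
          + if 4 * s < That.card then 4 * (n:ℝ) / β else 0)
          = AT / β - (D * That.card * q + 2 * tT / β) := by
        rw [hJT, ← hqdef]
        ring
      rw [hexpS, hexpT]
      linarith [h2]
    have hfinal : postWt X Y β D s S / (∑ S' : Finset (Fin p), postWt X Y β D s S')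
        ≤ Real.exp (-(2 * (S.card:ℝ)) * q) * (postWt X Y β D s That
          / (∑ S' : Finset (Fin p), postWt X Y β D s S')) := by
      rw [← mul_div_assoc]
      exact div_le_div_of_nonneg_right hwle hZpos.le
    rw [postPi, postPi]
    exact hfinal

end
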